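/- Let G be a locally virtually abelian group with a normal torsion subgroup T such that G/T is isomorphic to ℤ^∞. Then G has a subgroup isomorphic to ℤ^∞. -/

import Mathlib

set_option maxHeartbeats 1000000

/-- A group is *virtually abelian* if it has an abelian subgroup of finite index. -/
def VirtuallyAbelian (G : Type*) [Group G] : Prop :=
  ∃ A : Subgroup G, IsMulCommutative A ∧ A.FiniteIndex

/-- `ℤ^∞`, a free abelian group of countably infinite rank (written multiplicatively). -/
abbrev ZInf : Type := Multiplicative (ℕ →₀ ℤ)

/-- A group is *locally virtually abelian* if every finitely generated subgroup is
virtually abelian. -/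
def LocallyVirtuallyAbelian (G : Type*) [Group G] : Prop :=
  ∀ H : Subgroup G, Group.FG H → VirtuallyAbelian H

open scoped IsMulCommutative

/-- Key step: in a locally virtually abelian group, for any finitely generated subgroup `H`
and any `x ∈ H`, there is `b ∈ H` commuting with every element of `H` such that
`π b = (π x) ^ m` for some positive `m` (for any hom `π` to a commutative group). -/
lemma key_step {G : Type} [Group G] (hlva : LocallyVirtuallyAbelian G)
    {Z : Type} [CommGroup Z] (π : G →* Z) (H : Subgroup G) (hH : Group.FG H)
    {x : G} (hx : x ∈ H) :
    ∃ b ∈ H, (∀ y ∈ H, Commute y b) ∧ ∃ m : ℕ, 0 < m ∧ π b = (π x) ^ m := by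
  classical
  obtain ⟨A, hA, hAfi⟩ := hlva H hH
  haveI := hA
  haveI := hAfi
  set N : Subgroup ↥H := A.normalCore with hNdef
  haveI hNn : N.Normal := Subgroup.normalCore_normal A
  haveI : N.FiniteIndex := Subgroup.finiteIndex_normalCore A
  haveI : IsMulCommutative N := by
    refine ⟨⟨fun u v => ?_⟩⟩
    apply Subtype.ext
    simp only [Subgroup.coe_mul]
    exact Subgroup.mul_comm_of_mem_isMulCommutative (H := A) (A.normalCore_le u.2) (A.normalCore_le v.2)
  set x' : ↥H := ⟨x, hx⟩ with hx'def
  -- pigeonhole: some positive power of x' lies in N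
  obtain ⟨i, i', hne, heq⟩ := Finite.exists_ne_map_eq_of_infinite
    (fun n : ℕ => (QuotientGroup.mk (x' ^ n) : ↥H ⧸ N))
  wlog hlt : i < i' generalizing i i'
  · exact this i' i hne.symm heq.symm (by omega)
  have hmem : x' ^ (i' - i) ∈ N := by
    have h1 : (x' ^ i)⁻¹ * x' ^ i' ∈ N := (QuotientGroup.eq).mp heq
    have h2 : x' ^ i' = x' ^ i * x' ^ (i' - i) := by
      rw [← pow_add, Nat.add_sub_cancel' hlt.le]
    rwa [h2, inv_mul_cancel_left] at h1
  set j := i' - i with hjdef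
  have hj : 0 < j := by omega
  set a : ↥N := ⟨x' ^ j, hmem⟩ with hadef
  -- the averaged element
  have hwd : ∀ w w' : ↥H, (QuotientGroup.leftRel N) w w' →
      (⟨w * ↑a * w⁻¹, hNn.conj_mem a.1 a.2 w⟩ : ↥N) = ⟨w' * ↑a * w'⁻¹, hNn.conj_mem a.1 a.2 w'⟩ := by
    intro w w' h
    rw [QuotientGroup.leftRel_apply] at h
    apply Subtype.ext
    have hcomm : (w⁻¹ * w') * (↑a : ↥H) = ↑a * (w⁻¹ * w') :=
      Subgroup.mul_comm_of_mem_isMulCommutative (H := N) h a.2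
    have key : (w⁻¹ * w') * (↑a : ↥H) * (w⁻¹ * w')⁻¹ = (↑a : ↥H) := by rw [hcomm]; group
    show (w : ↥H) * ↑a * w⁻¹ = w' * ↑a * w'⁻¹
    calc (w : ↥H) * ↑a * w⁻¹ = w * ((w⁻¹ * w') * ↑a * (w⁻¹ * w')⁻¹) * w⁻¹ := by rw [key]
      _ = w' * ↑a * w'⁻¹ := by group
  let c : ↥H ⧸ N → ↥N := fun q =>
    Quotient.liftOn' q (fun w => (⟨w * ↑a * w⁻¹, hNn.conj_mem a.1 a.2 w⟩ : ↥N)) hwd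
  have hc_mk : ∀ w : ↥H, c (QuotientGroup.mk w) = ⟨w * ↑a * w⁻¹, hNn.conj_mem a.1 a.2 w⟩ :=
    fun w => rfl
  haveI : Fintype (↥H ⧸ N) := Fintype.ofFinite _
  set b₀ : ↥N := ∏ q : ↥H ⧸ N, c q with hb₀def
  refine ⟨((b₀ : ↥H) : G), (b₀ : ↥H).2, ?_, ?_⟩
  · -- commuting
    intro y hy
    set y' : ↥H := ⟨y, hy⟩ with hy'def
    -- conjugation as a hom on N
    let φ : ↥N →* ↥N :=
      { toFun := fun n => ⟨y' * ↑n * y'⁻¹, hNn.conj_mem n.1 n.2 y'⟩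
        map_one' := by apply Subtype.ext; simp
        map_mul' := fun m n => by
          apply Subtype.ext
          show y' * (↑m * ↑n) * y'⁻¹ = (y' * ↑m * y'⁻¹) * (y' * ↑n * y'⁻¹)
          group }
    have hφc : ∀ q : ↥H ⧸ N, φ (c q) = c (QuotientGroup.mk y' * q) := by
      intro q
      induction q using Quotient.inductionOn' with
      | h w =>
        have : (QuotientGroup.mk y' * Quotient.mk'' w : ↥H ⧸ N) = QuotientGroup.mk (y' * w) := rfl
        rw [this]
        show φ (c (QuotientGroup.mk w)) = c (QuotientGroup.mk (y' * w))
        rw [hc_mk, hc_mk]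
        apply Subtype.ext
        show y' * (w * ↑a * w⁻¹) * y'⁻¹ = (y' * w) * ↑a * (y' * w)⁻¹
        group
    have hfix : φ b₀ = b₀ := by
      rw [hb₀def, map_prod]
      calc ∏ q : ↥H ⧸ N, φ (c q) = ∏ q : ↥H ⧸ N, c (QuotientGroup.mk y' * q) := by
            exact Finset.prod_congr rfl fun q _ => hφc q
        _ = ∏ q : ↥H ⧸ N, c q := Equiv.prod_comp (Equiv.mulLeft (QuotientGroup.mk y')) c
    have hfix' : y' * (↑b₀ : ↥H) * y'⁻¹ = ↑b₀ := congrArg Subtype.val hfix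
    have h3 : y' * (↑b₀ : ↥H) = ↑b₀ * y' := mul_inv_eq_iff_eq_mul.mp hfix'
    have h4 := congrArg (Subtype.val : ↥H → G) h3
    simpa [Commute, SemiconjBy] using h4
  · -- the π-value
    let π' : ↥N →* Z := (π.comp H.subtype).comp N.subtype
    have hval : ∀ q : ↥H ⧸ N, π' (c q) = π' a := by
      intro q
      induction q using Quotient.inductionOn' with
      | h w =>
        show π' (c (QuotientGroup.mk w)) = π' a
        rw [hc_mk]
        show π (((w * ↑a * w⁻¹ : ↥H) : G)) = π ((a : ↥H) : G)
        push_cast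
        simp [map_mul, mul_comm]
    refine ⟨j * Fintype.card (↥H ⧸ N), ?_, ?_⟩
    · have : 0 < Fintype.card (↥H ⧸ N) := Fintype.card_pos
      positivity
    · have h1 : π ((b₀ : ↥H) : G) = π' b₀ := rfl
      rw [h1, hb₀def, map_prod]
      have h2 : ∀ q : ↥H ⧸ N, π' (c q) = (π x) ^ j := by
        intro q
        rw [hval q]
        show π (((x' ^ j : ↥H) : G)) = (π x) ^ j
        push_cast
        simp [map_pow, hx'def]
      rw [Finset.prod_congr rfl fun q _ => h2 q, Finset.prod_const, Finset.card_univ, ← pow_mul,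
        mul_comm]

/-- **Lemma.** Let `G` be a locally virtually abelian group with a normal torsion subgroup `T`
such that `G/T ≅ ℤ^∞`. Then `G` has a subgroup isomorphic to `ℤ^∞`. -/
theorem zinf_subgroup_of_torsion_quotient (G : Type) [Group G]
    (hlva : LocallyVirtuallyAbelian G)
    (T : Subgroup G) [T.Normal] (htor : ∀ x ∈ T, IsOfFinOrder x)
    (hq : Nonempty ((G ⧸ T) ≃* ZInf)) :
    ∃ H : Subgroup G, Nonempty (H ≃* ZInf) := by
  classical
  obtain ⟨e⟩ := hq
  let π : G →* ZInf := e.toMonoidHom.comp (QuotientGroup.mk' T)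
  have hπsurj : Function.Surjective π := e.surjective.comp (QuotientGroup.mk'_surjective T)
  choose g hg using fun i : ℕ => hπsurj (Multiplicative.ofAdd (Finsupp.single i 1))
  let S : ℕ → Subgroup G := fun n => Subgroup.closure (g '' Set.Iic n)
  have hSfg : ∀ n, Group.FG (S n) := fun n =>
    (Group.fg_iff_subgroup_fg (S n)).mpr
      ((Subgroup.fg_iff (S n)).mpr ⟨g '' Set.Iic n, rfl, (Set.finite_Iic n).image g⟩)
  have hgmem : ∀ i n, i ≤ n → g i ∈ S n := fun i n h =>
    Subgroup.subset_closure ⟨i, h, rfl⟩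
  have hSmono : ∀ i j, i ≤ j → S i ≤ S j := fun i j h =>
    Subgroup.closure_mono (Set.image_mono (Set.Iic_subset_Iic.mpr h))
  choose b hbmem hbcomm m hmpos hπb using
    fun n => key_step hlva π (S n) (hSfg n) (hgmem n n le_rfl)
  have hπb' : ∀ n, π (b n) = Multiplicative.ofAdd (Finsupp.single n (m n : ℤ)) := by
    intro n
    rw [hπb n, hg n]
    apply Multiplicative.toAdd.injective
    rw [toAdd_pow, toAdd_ofAdd, toAdd_ofAdd, Finsupp.smul_single]
    simp
  have hcomm : ∀ i j, Commute (b i) (b j) := by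
    intro i j
    rcases le_total i j with h | h
    · exact hbcomm j (b i) (hSmono i j h (hbmem i))
    · exact (hbcomm i (b j) (hSmono j i h (hbmem j))).symm
  -- the abelian subgroup generated by the `b`'s
  let A : Subgroup G := Subgroup.closure (Set.range b)
  have hbA : ∀ i, b i ∈ A := fun i => Subgroup.subset_closure ⟨i, rfl⟩
  haveI : IsMulCommutative A := by
    refine ⟨⟨fun u v => ?_⟩⟩
    apply Subtype.ext
    simp only [Subgroup.coe_mul]
    refine Subgroup.closure_induction₂
      (p := fun s t _ _ => Commute s t)
      (fun p q hp hq => ?_)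
      (fun p _ => Commute.one_left p) (fun p _ => Commute.one_right p)
      (fun p q r _ _ _ h1 h2 => h1.mul_left h2)
      (fun p q r _ _ _ h1 h2 => h1.mul_right h2)
      (fun p q _ _ h => h.inv_left) (fun p q _ _ h => h.inv_right) u.2 v.2
    obtain ⟨i, rfl⟩ := hp
    obtain ⟨j, rfl⟩ := hq
    exact hcomm i j
  let h : ℕ → ↥A := fun i => ⟨b i, hbA i⟩
  let ψ₀ : (ℕ →₀ ℤ) →+ Additive ↥A :=
    Finsupp.liftAddHom fun i => zmultiplesHom (Additive ↥A) (Additive.ofMul (h i))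
  let ψ : ZInf →* G :=
    A.subtype.comp ((MulEquiv.multiplicativeAdditive ↥A).toMonoidHom.comp
      (AddMonoidHom.toMultiplicative ψ₀))
  have hψ_single : ∀ i, ψ (Multiplicative.ofAdd (Finsupp.single i 1)) = b i := by
    intro i
    show A.subtype _ = b i
    have h1 : ψ₀ (Finsupp.single i 1) = Additive.ofMul (h i) := by
      rw [Finsupp.liftAddHom_apply_single]
      simp
    simp only [ψ, MonoidHom.comp_apply]
    have h2 : (AddMonoidHom.toMultiplicative ψ₀) (Multiplicative.ofAdd (Finsupp.single i 1))
        = Multiplicative.ofAdd (Additive.ofMul (h i)) := by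
      exact congrArg Multiplicative.ofAdd h1
    rw [h2]
    rfl
  let Θ : (ℕ →₀ ℤ) →+ (ℕ →₀ ℤ) := MonoidHom.toAdditive (π.comp ψ)
  have hΘ_apply : ∀ s : ℕ →₀ ℤ, Θ s = Multiplicative.toAdd (π (ψ (Multiplicative.ofAdd s))) :=
    fun s => rfl
  have hΘ_single : ∀ (i : ℕ) (n : ℤ), Θ (Finsupp.single i n) = Finsupp.single i (n * m i) := by
    intro i n
    have h1 : Finsupp.single i n = n • Finsupp.single i (1 : ℤ) := by
      rw [Finsupp.smul_single]; simp
    rw [h1, map_zsmul]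
    have h2 : Θ (Finsupp.single i 1) = Finsupp.single i (m i : ℤ) := by
      rw [hΘ_apply, hψ_single, hπb', toAdd_ofAdd]
    rw [h2, Finsupp.smul_single]
    simp [mul_comm]
  have hcoord : ∀ (s : ℕ →₀ ℤ) (k : ℕ), Θ s k = s k * (m k : ℤ) := by
    intro s
    induction s using Finsupp.induction_linear with
    | zero => simp
    | add f f' hf hf' => intro k; simp [map_add, hf, hf', add_mul]
    | single i n =>
      intro k
      rw [hΘ_single]
      rcases eq_or_ne i k with rfl | hik
      · simp
      · simp [Finsupp.single_apply_eq_zero.mpr, Finsupp.single_eq_of_ne' hik]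
  have hinj : Function.Injective ψ := by
    rw [injective_iff_map_eq_one]
    intro f hf
    have h0 : Θ (Multiplicative.toAdd f) = 0 := by
      rw [hΘ_apply]
      simp [hf]
    have hz : Multiplicative.toAdd f = 0 := by
      ext k
      have hk := hcoord (Multiplicative.toAdd f) k
      rw [h0] at hk
      have hmk : (m k : ℤ) ≠ 0 := Int.natCast_ne_zero.mpr (hmpos k).ne'
      have := hk.symm
      rcases mul_eq_zero.mp this with h | h
      · simpa using h
      · exact absurd h hmk
    calc f = Multiplicative.ofAdd (Multiplicative.toAdd f) := rfl
      _ = Multiplicative.ofAdd 0 := by rw [hz]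
      _ = 1 := rfl
  exact ⟨ψ.range, ⟨(MonoidHom.ofInjective hinj).symm⟩⟩
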